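/- arXiv:1805.01827 — 4 statements merged into one kernel-verified Lean document; each statement's English description precedes it below -/
import Mathlib

section
/- Let (V, E, s, t) be a finite oriented graph with even Laplacian Δ⁺ = I·Iᵀ and odd Laplacian Δ⁻ = Iᵀ·I, regarded as real matrices. Then: (1) for every real λ ≠ 0, the dimension of the kernel of (Δ⁺ − λ·1) equals the dimension of the kernel of (Δ⁻ − λ·1) (nonzero eigenvalues occur with equal multiplicity); and (2) the dimension of the kernel of Δ⁻ equals |E| − |V| + c, where c is the number of connected components of the underlying simple graph G on V in which a ~ b iff a ≠ b and some edge e satisfies {s(e), t(e)} = {a, b}. -/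
open Matrix

/-- The incidence matrix of a finite oriented graph given by source and target maps. -/
noncomputable def incidenceMatrix {V E : Type*} [DecidableEq V] (s t : E → V) :
    Matrix V E ℝ :=
  fun v e => if v = t e then 1 else if v = s e then -1 else 0

/-- The even Laplacian `Δ⁺ = I · Iᵀ` of a finite oriented graph. -/
noncomputable def evenLaplacian {V E : Type*} [Fintype E] [DecidableEq V] (s t : E → V) :
    Matrix V V ℝ :=
  incidenceMatrix s t * (incidenceMatrix s t)ᵀ

/-- The odd Laplacian `Δ⁻ = Iᵀ · I` of a finite oriented graph. -/
noncomputable def oddLaplacian {V E : Type*} [Fintype V] [DecidableEq V] (s t : E → V) :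
    Matrix E E ℝ :=
  (incidenceMatrix s t)ᵀ * incidenceMatrix s t

/-- The underlying simple graph of an oriented graph: `a ~ b` iff `a ≠ b` and some edge
has `{s e, t e} = {a, b}`. -/
def underlyingGraph {V E : Type*} (s t : E → V) : SimpleGraph V where
  Adj a b := a ≠ b ∧ ∃ e : E, ({s e, t e} : Set V) = {a, b}
  symm := by
    constructor
    rintro a b ⟨hab, e, he⟩
    exact ⟨hab.symm, e, he.trans (Set.pair_comm a b)⟩
  loopless := ⟨fun a h => h.1 rfl⟩

/-- Auxiliary: one-sided inequality for nonzero eigenvalue multiplicities. -/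
lemma aux_ker_le {m n : Type*} [Fintype m] [Fintype n] [DecidableEq m] [DecidableEq n]
    (A : Matrix m n ℝ) (lam : ℝ) (hlam : lam ≠ 0) :
    Module.finrank ℝ (LinearMap.ker (Matrix.mulVecLin (A * Aᵀ - lam • 1))) ≤
      Module.finrank ℝ (LinearMap.ker (Matrix.mulVecLin (Aᵀ * A - lam • 1))) := by
  have hmem : ∀ x : m → ℝ, (A * Aᵀ - lam • 1).mulVec x = 0 →
      (Aᵀ * A - lam • 1).mulVec (Aᵀ.mulVec x) = 0 := by
    intro x hx
    have hx' : A.mulVec (Aᵀ.mulVec x) = lam • x := by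
      have := hx
      rw [Matrix.sub_mulVec, ← Matrix.mulVec_mulVec, Matrix.smul_mulVec, Matrix.one_mulVec,
        sub_eq_zero] at this
      exact this
    rw [Matrix.sub_mulVec, ← Matrix.mulVec_mulVec, Matrix.smul_mulVec, Matrix.one_mulVec, hx',
      Matrix.mulVec_smul, sub_self]
  let f : (LinearMap.ker (Matrix.mulVecLin (A * Aᵀ - lam • 1))) →ₗ[ℝ]
      (LinearMap.ker (Matrix.mulVecLin (Aᵀ * A - lam • 1))) :=
    { toFun := fun x => ⟨Aᵀ.mulVec x.1, by
        have := x.2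
        simp only [LinearMap.mem_ker, mulVecLin_apply] at this ⊢
        exact hmem x.1 this⟩
      map_add' := fun x y => by
        ext1; simp [mulVec_add]
      map_smul' := fun c x => by
        ext1; simp [mulVec_smul] }
  have hinj : Function.Injective f := by
    intro x y hxy
    have h1 : Aᵀ.mulVec x.1 = Aᵀ.mulVec y.1 := congrArg Subtype.val hxy
    have key : ∀ z : m → ℝ, z ∈ LinearMap.ker (Matrix.mulVecLin (A * Aᵀ - lam • 1)) →
        A.mulVec (Aᵀ.mulVec z) = lam • z := by
      intro z hz
      simp only [LinearMap.mem_ker, mulVecLin_apply] at hz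
      rw [Matrix.sub_mulVec, ← Matrix.mulVec_mulVec, Matrix.smul_mulVec, Matrix.one_mulVec,
        sub_eq_zero] at hz
      exact hz
    have h2 : lam • x.1 = lam • y.1 := by
      rw [← key x.1 x.2, ← key y.1 y.2, h1]
    ext1
    have := congrArg (fun v => lam⁻¹ • v) h2
    simpa [smul_smul, inv_mul_cancel₀ hlam] using this
  exact LinearMap.finrank_le_finrank_of_injective hinj

section Graph

variable {V E : Type*} [Fintype V] [Fintype E] [DecidableEq V] [DecidableEq E]
  (s t : E → V)

lemma mulVec_transpose_incidence (x : V → ℝ) (e : E) (he : s e ≠ t e) :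
    ((incidenceMatrix s t)ᵀ.mulVec x) e = x (t e) - x (s e) := by
  simp only [Matrix.mulVec, Matrix.transpose_apply, dotProduct, incidenceMatrix]
  have : ∀ v : V, (if v = t e then (1:ℝ) else if v = s e then -1 else 0) * x v
      = (if v = t e then x v else 0) - (if v = s e then x v else 0) := by
    intro v
    by_cases h1 : v = t e
    · subst h1
      rw [if_pos rfl, if_pos rfl, if_neg (fun h => he h.symm)]
      ring
    · by_cases h2 : v = s e <;> simp [h1, h2, he]
  rw [Finset.sum_congr rfl (fun v _ => this v), Finset.sum_sub_distrib]
  simp [Finset.sum_ite_eq']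

lemma ker_mem_iff (hst : ∀ e, s e ≠ t e) (x : V → ℝ) :
    (incidenceMatrix s t)ᵀ.mulVec x = 0 ↔ ∀ e, x (t e) = x (s e) := by
  constructor
  · intro h e
    have := congrFun h e
    rw [mulVec_transpose_incidence s t x e (hst e), Pi.zero_apply, sub_eq_zero] at this
    exact this
  · intro h
    funext e
    rw [mulVec_transpose_incidence s t x e (hst e), Pi.zero_apply, h e, sub_self]

/-- Functions in the kernel of `Iᵀ` are constant on connected components. -/
lemma const_of_ker (x : V → ℝ) (hx : ∀ e, x (t e) = x (s e))
    {a b : V} (w : (underlyingGraph s t).Walk a b) : x a = x b := by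
  induction w with
  | nil => rfl
  | cons h _ ih =>
    rw [← ih]
    obtain ⟨hne, e, he⟩ := h
    rcases Set.pair_eq_pair_iff.mp he with ⟨h1, h2⟩ | ⟨h1, h2⟩
    · rw [← h1, ← h2, hx e]
    · rw [← h1, ← h2, hx e]

lemma finrank_ker_transpose (hst : ∀ e, s e ≠ t e) :
    Module.finrank ℝ (LinearMap.ker (Matrix.mulVecLin (incidenceMatrix s t)ᵀ)) =
      Nat.card (underlyingGraph s t).ConnectedComponent := by
  set G := underlyingGraph s t with hG
  have : Finite G.ConnectedComponent := Quot.finite _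
  have : Fintype G.ConnectedComponent := Fintype.ofFinite _
  let Φ : (G.ConnectedComponent → ℝ) →ₗ[ℝ]
      (LinearMap.ker (Matrix.mulVecLin (incidenceMatrix s t)ᵀ)) :=
    { toFun := fun f => ⟨fun v => f (G.connectedComponentMk v), by
        simp only [LinearMap.mem_ker, mulVecLin_apply]
        rw [ker_mem_iff s t hst]
        intro e
        have hadj : (underlyingGraph s t).Adj (s e) (t e) := ⟨hst e, e, rfl⟩
        congr 1
        exact SimpleGraph.ConnectedComponent.sound hadj.symm.reachable⟩
      map_add' := fun f g => rfl
      map_smul' := fun c f => rfl }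
  have hbij : Function.Bijective Φ := by
    constructor
    · intro f g hfg
      have h1 : ∀ v, f (G.connectedComponentMk v) = g (G.connectedComponentMk v) :=
        fun v => congrFun (congrArg Subtype.val hfg) v
      funext c
      exact c.ind h1
    · rintro ⟨x, hx⟩
      simp only [LinearMap.mem_ker, mulVecLin_apply] at hx
      rw [ker_mem_iff s t hst] at hx
      refine ⟨SimpleGraph.ConnectedComponent.lift x
        (fun v w p _ => const_of_ker s t x hx p), ?_⟩
      ext v
      rfl
  rw [← LinearEquiv.finrank_eq (LinearEquiv.ofBijective Φ hbij),
    Module.finrank_fintype_fun_eq_card, Nat.card_eq_fintype_card]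

lemma conjTranspose_eq_transpose (A : Matrix V E ℝ) : Aᴴ = Aᵀ := by
  ext i j; simp [Matrix.conjTranspose_apply]

end Graph

theorem even_odd_laplacian_kernels
    {V E : Type*} [Fintype V] [Fintype E] [DecidableEq V] [DecidableEq E]
    (s t : E → V) (hst : ∀ e, s e ≠ t e) :
    (∀ lam : ℝ, lam ≠ 0 →
      Module.finrank ℝ
          (LinearMap.ker (Matrix.mulVecLin (evenLaplacian s t - lam • 1))) =
        Module.finrank ℝ
          (LinearMap.ker (Matrix.mulVecLin (oddLaplacian s t - lam • 1)))) ∧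
    (Module.finrank ℝ (LinearMap.ker (Matrix.mulVecLin (oddLaplacian s t))) : ℤ) =
      (Fintype.card E : ℤ) - (Fintype.card V : ℤ) +
        (Nat.card (underlyingGraph s t).ConnectedComponent : ℤ) := by
  set A := incidenceMatrix s t with hA
  constructor
  · intro lam hlam
    show Module.finrank ℝ (LinearMap.ker (Matrix.mulVecLin (A * Aᵀ - lam • 1))) = Module.finrank ℝ (LinearMap.ker (Matrix.mulVecLin (Aᵀ * A - lam • 1)))
    refine le_antisymm (aux_ker_le A lam hlam) ?_
    have := aux_ker_le Aᵀ lam hlam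
    rwa [Matrix.transpose_transpose] at this
  · -- kernel of Δ⁻ equals kernel of A
    have hker : LinearMap.ker (Matrix.mulVecLin (oddLaplacian s t)) =
        LinearMap.ker (Matrix.mulVecLin A) := by
      have := Matrix.ker_mulVecLin_conjTranspose_mul_self A
      rwa [conjTranspose_eq_transpose A] at this
    have hker' : LinearMap.ker (Matrix.mulVecLin (evenLaplacian s t)) =
        LinearMap.ker (Matrix.mulVecLin Aᵀ) := by
      have := Matrix.ker_mulVecLin_conjTranspose_mul_self Aᵀ
      rwa [conjTranspose_eq_transpose Aᵀ, Matrix.transpose_transpose] at this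
    have rn1 := LinearMap.finrank_range_add_finrank_ker (Matrix.mulVecLin A)
    have rn2 := LinearMap.finrank_range_add_finrank_ker (Matrix.mulVecLin Aᵀ)
    rw [Module.finrank_fintype_fun_eq_card] at rn1 rn2
    have hrank : Aᵀ.rank = A.rank := Matrix.rank_transpose A
    have hrankA : A.rank = Module.finrank ℝ (LinearMap.range (Matrix.mulVecLin A)) := rfl
    have hrankAT : Aᵀ.rank = Module.finrank ℝ (LinearMap.range (Matrix.mulVecLin Aᵀ)) := rfl
    have hc := finrank_ker_transpose s t hst
    rw [hker]
    rw [← hA] at hc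
    omega
end

section
/- Let Γ₁ be a finite simple graph on V₁ with Laplacian L₁ and Γ₂ a finite simple graph on V₂ with Laplacian L₂; fix v₁ ∈ V₁ and v₂ ∈ V₂. Let Γ be the one-vertex interface gluing of Γ₁ and Γ₂ at (v₁, v₂), with Laplacian L. Then, as polynomials in λ over ℝ: det(L − λ·1) = det(L₁ − λ·1) · det(L₂⟨v₂⟩ − λ·1) + det(L₁⟨v₁⟩ − λ·1) · det(L₂ − λ·1) + λ · det(L₁⟨v₁⟩ − λ·1) · det(L₂⟨v₂⟩ − λ·1), where M⟨v⟩ denotes the principal submatrix of M obtained by deleting the row and column indexed by v. -/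
open Polynomial

open scoped Classical

/-- `det (M - λ·1)`, the characteristic determinant of a square real matrix,
as a polynomial in `λ`. -/
noncomputable def charDet {n : Type*} [Fintype n] [DecidableEq n] (M : Matrix n n ℝ) :
    ℝ[X] :=
  (M.map C - (X : ℝ[X]) • 1).det

/-- The principal submatrix of `M` obtained by deleting the row and column indexed by `v`. -/
def deleteVertex {n : Type*} (M : Matrix n n ℝ) (v : n) :
    Matrix {x : n // x ≠ v} {x : n // x ≠ v} ℝ :=
  M.submatrix Subtype.val Subtype.val

/-- The one-vertex interface gluing of `G₁` and `G₂` at `(v₁, v₂)`: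
the graph on `V₁ ⊕ {x : V₂ // x ≠ v₂}` identifying `v₁` with `v₂`. -/
def interfaceGlueOne {V₁ V₂ : Type*} (G₁ : SimpleGraph V₁) (G₂ : SimpleGraph V₂)
    (v₁ : V₁) (v₂ : V₂) : SimpleGraph (V₁ ⊕ {x : V₂ // x ≠ v₂}) where
  Adj x y :=
    match x, y with
    | Sum.inl u, Sum.inl v => G₁.Adj u v
    | Sum.inr u, Sum.inr v => G₂.Adj u v
    | Sum.inl u, Sum.inr v => u = v₁ ∧ G₂.Adj v₂ v
    | Sum.inr u, Sum.inl v => v = v₁ ∧ G₂.Adj v₂ u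
  symm := by
    constructor
    rintro (u | u) (v | v) h
    · exact G₁.adj_symm h
    · exact h
    · exact h
    · exact G₂.adj_symm h
  loopless := by
    constructor
    rintro (u | u) h
    · exact G₁.irrefl h
    · exact G₂.irrefl h

set_option linter.unusedSectionVars false
set_option linter.unnecessarySeqFocus false

section Gen
variable {R : Type*} [CommRing R] {n₁ n₂ : Type*} [Fintype n₁] [Fintype n₂]
  [DecidableEq n₁] [DecidableEq n₂]

/-- abstract one-vertex gluing of two square matrices, with an extra `x` at the glue vertex. -/
noncomputable def glueMat (A : Matrix n₁ n₁ R) (B : Matrix n₂ n₂ R) (x : R) (v₁ : n₁) (v₂ : n₂) :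
    Matrix (n₁ ⊕ {y : n₂ // y ≠ v₂}) (n₁ ⊕ {y : n₂ // y ≠ v₂}) R :=
  fun i j => match i, j with
  | Sum.inl a, Sum.inl a' => A a a' + if a = v₁ ∧ a' = v₁ then B v₂ v₂ + x else 0
  | Sum.inl a, Sum.inr b => if a = v₁ then B v₂ b.1 else 0
  | Sum.inr b, Sum.inl a => if a = v₁ then B b.1 v₂ else 0
  | Sum.inr b, Sum.inr b' => B b.1 b'.1

@[simp] lemma glueMat_ll (A : Matrix n₁ n₁ R) (B : Matrix n₂ n₂ R) (x : R) (v₁ : n₁) (v₂ : n₂)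
    (a a' : n₁) : glueMat A B x v₁ v₂ (Sum.inl a) (Sum.inl a') =
      A a a' + if a = v₁ ∧ a' = v₁ then B v₂ v₂ + x else 0 := rfl
@[simp] lemma glueMat_lr (A : Matrix n₁ n₁ R) (B : Matrix n₂ n₂ R) (x : R) (v₁ : n₁) (v₂ : n₂)
    (a : n₁) (b : {y : n₂ // y ≠ v₂}) : glueMat A B x v₁ v₂ (Sum.inl a) (Sum.inr b) =
      (if a = v₁ then B v₂ b.1 else 0) := rfl
@[simp] lemma glueMat_rl (A : Matrix n₁ n₁ R) (B : Matrix n₂ n₂ R) (x : R) (v₁ : n₁) (v₂ : n₂)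
    (b : {y : n₂ // y ≠ v₂}) (a : n₁) : glueMat A B x v₁ v₂ (Sum.inr b) (Sum.inl a) =
      (if a = v₁ then B b.1 v₂ else 0) := rfl
@[simp] lemma glueMat_rr (A : Matrix n₁ n₁ R) (B : Matrix n₂ n₂ R) (x : R) (v₁ : n₁) (v₂ : n₂)
    (b b' : {y : n₂ // y ≠ v₂}) : glueMat A B x v₁ v₂ (Sum.inr b) (Sum.inr b') =
      B b.1 b'.1 := rfl

noncomputable def glueEquiv₂ (v₁ : n₁) (v₂ : n₂) :
    n₂ ⊕ {y : n₁ // y ≠ v₁} ≃ n₁ ⊕ {y : n₂ // y ≠ v₂} where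
  toFun := fun i => match i with
    | Sum.inl b => if h : b = v₂ then Sum.inl v₁ else Sum.inr ⟨b, h⟩
    | Sum.inr a => Sum.inl a.1
  invFun := fun i => match i with
    | Sum.inl a => if h : a = v₁ then Sum.inl v₂ else Sum.inr ⟨a, h⟩
    | Sum.inr b => Sum.inl b.1
  left_inv := by
    rintro (b | a)
    · by_cases h : b = v₂ <;> simp [h]
    · simp [a.2]
  right_inv := by
    rintro (a | b)
    · by_cases h : a = v₁ <;> simp [h]
    · simp [b.2]

@[simp] lemma glueEquiv₂_inl (v₁ : n₁) (v₂ : n₂) (b : n₂) :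
    glueEquiv₂ (n₁ := n₁) v₁ v₂ (Sum.inl b) =
      if h : b = v₂ then Sum.inl v₁ else Sum.inr ⟨b, h⟩ := rfl
@[simp] lemma glueEquiv₂_inr (v₁ : n₁) (v₂ : n₂) (a : {y : n₁ // y ≠ v₁}) :
    glueEquiv₂ (n₂ := n₂) v₁ v₂ (Sum.inr a) = Sum.inl a.1 := rfl

noncomputable def glueEquiv₃ (v₁ : n₁) (v₂ : n₂) :
    Unit ⊕ ({y : n₁ // y ≠ v₁} ⊕ {y : n₂ // y ≠ v₂}) ≃ n₁ ⊕ {y : n₂ // y ≠ v₂} where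
  toFun := fun i => match i with
    | Sum.inl _ => Sum.inl v₁
    | Sum.inr (Sum.inl a) => Sum.inl a.1
    | Sum.inr (Sum.inr b) => Sum.inr b
  invFun := fun i => match i with
    | Sum.inl a => if h : a = v₁ then Sum.inl () else Sum.inr (Sum.inl ⟨a, h⟩)
    | Sum.inr b => Sum.inr (Sum.inr b)
  left_inv := by
    rintro (⟨⟩ | (a | b))
    · simp
    · simp [a.2]
    · simp
  right_inv := by
    rintro (a | b)
    · by_cases h : a = v₁ <;> simp [h]
    · simp

@[simp] lemma glueEquiv₃_inl (v₁ : n₁) (v₂ : n₂) (u : Unit) :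
    glueEquiv₃ (n₂ := n₂) v₁ v₂ (Sum.inl u) = Sum.inl v₁ := rfl
@[simp] lemma glueEquiv₃_inrl (v₁ : n₁) (v₂ : n₂) (a : {y : n₁ // y ≠ v₁}) :
    glueEquiv₃ (n₂ := n₂) v₁ v₂ (Sum.inr (Sum.inl a)) = Sum.inl a.1 := rfl
@[simp] lemma glueEquiv₃_inrr (v₁ : n₁) (v₂ : n₂) (b : {y : n₂ // y ≠ v₂}) :
    glueEquiv₃ (n₁ := n₁) v₁ v₂ (Sum.inr (Sum.inr b)) = Sum.inr b := rfl

theorem det_glueMat (A : Matrix n₁ n₁ R) (B : Matrix n₂ n₂ R) (x : R) (v₁ : n₁) (v₂ : n₂) :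
    (glueMat A B x v₁ v₂).det =
      A.det * (B.submatrix (Subtype.val : {y : n₂ // y ≠ v₂} → n₂) Subtype.val).det
      + (A.submatrix (Subtype.val : {y : n₁ // y ≠ v₁} → n₁) Subtype.val).det * B.det
      + x * ((A.submatrix (Subtype.val : {y : n₁ // y ≠ v₁} → n₁) Subtype.val).det *
          (B.submatrix (Subtype.val : {y : n₂ // y ≠ v₂} → n₂) Subtype.val).det) := by
  classical
  set N := glueMat A B x v₁ v₂ with hN
  set v : n₁ ⊕ {y : n₂ // y ≠ v₂} := Sum.inl v₁ with hv
  set r₁ : n₁ ⊕ {y : n₂ // y ≠ v₂} → R := Sum.elim (A v₁) (fun _ => 0) with hr₁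
  set r₂ : n₁ ⊕ {y : n₂ // y ≠ v₂} → R :=
    Sum.elim (fun a => if a = v₁ then B v₂ v₂ else 0) (fun b => B v₂ b.1) with hr₂
  set r₃ : n₁ ⊕ {y : n₂ // y ≠ v₂} → R := Pi.single v 1 with hr₃
  have hrow : N v = r₁ + r₂ + x • r₃ := by
    funext w
    rcases w with a | b
    · simp only [hN, hv, hr₁, hr₂, hr₃, glueMat_ll, Pi.add_apply, Pi.smul_apply, Sum.elim_inl,
        Pi.single_apply, smul_eq_mul]
      by_cases h : a = v₁ <;> simp [h] <;> ring
    · simp [hN, hv, hr₁, hr₂, hr₃, Pi.single_apply]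
  have hsplit : N.det = (N.updateRow v r₁).det + (N.updateRow v r₂).det
      + x * (N.updateRow v r₃).det := by
    conv_lhs => rw [← Matrix.updateRow_eq_self N v, hrow]
    rw [Matrix.det_updateRow_add, Matrix.det_updateRow_add, Matrix.det_updateRow_smul]
  have h1 : (N.updateRow v r₁).det =
      A.det * (B.submatrix (Subtype.val : {y : n₂ // y ≠ v₂} → n₂) Subtype.val).det := by
    have e1 : N.updateRow v r₁ = Matrix.fromBlocks A 0
        (Matrix.of fun b a => if a = v₁ then B b.1 v₂ else 0)
        (B.submatrix (Subtype.val : {y : n₂ // y ≠ v₂} → n₂) Subtype.val) := by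
      ext i j
      rcases i with a | b <;> rcases j with a' | b'
      · by_cases h : a = v₁ <;> simp [Matrix.updateRow_apply, hv, hr₁, hN, h]
      · by_cases h : a = v₁ <;> simp [Matrix.updateRow_apply, hv, hr₁, hN, h]
      · simp [Matrix.updateRow_apply, hv, hN]
      · simp [Matrix.updateRow_apply, hv, hN]
    rw [e1, Matrix.det_fromBlocks_zero₁₂]
  have h2 : (N.updateRow v r₂).det =
      (A.submatrix (Subtype.val : {y : n₁ // y ≠ v₁} → n₁) Subtype.val).det * B.det := by
    rw [← Matrix.det_submatrix_equiv_self (glueEquiv₂ v₁ v₂)]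
    have e2 : ((N.updateRow v r₂).submatrix (glueEquiv₂ v₁ v₂) (glueEquiv₂ v₁ v₂)) =
        Matrix.fromBlocks B 0
        (Matrix.of fun a b => ((N.updateRow v r₂).submatrix (glueEquiv₂ v₁ v₂) (glueEquiv₂ v₁ v₂))
          (Sum.inr a) (Sum.inl b))
        (A.submatrix (Subtype.val : {y : n₁ // y ≠ v₁} → n₁) Subtype.val) := by
      ext i j
      rcases i with b | a <;> rcases j with b' | a'
      · by_cases h : b = v₂ <;> by_cases h' : b' = v₂ <;>
          simp [Matrix.updateRow_apply, hv, hr₂, hN, h, h']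
      · by_cases h : b = v₂ <;>
          simp [Matrix.updateRow_apply, hv, hr₂, hN, h, a'.2]
      · rfl
      · simp [Matrix.updateRow_apply, hv, hN, a.2]
    rw [e2, Matrix.det_fromBlocks_zero₁₂, mul_comm]
  have h3 : (N.updateRow v r₃).det =
      (A.submatrix (Subtype.val : {y : n₁ // y ≠ v₁} → n₁) Subtype.val).det *
      (B.submatrix (Subtype.val : {y : n₂ // y ≠ v₂} → n₂) Subtype.val).det := by
    rw [← Matrix.det_submatrix_equiv_self (glueEquiv₃ v₁ v₂)]
    have e3 : ((N.updateRow v r₃).submatrix (glueEquiv₃ v₁ v₂) (glueEquiv₃ v₁ v₂)) =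
        Matrix.fromBlocks (1 : Matrix Unit Unit R) 0
        (Matrix.of fun a b => ((N.updateRow v r₃).submatrix (glueEquiv₃ v₁ v₂) (glueEquiv₃ v₁ v₂))
          (Sum.inr a) (Sum.inl b))
        (Matrix.fromBlocks
          (A.submatrix (Subtype.val : {y : n₁ // y ≠ v₁} → n₁) Subtype.val) 0 0
          (B.submatrix (Subtype.val : {y : n₂ // y ≠ v₂} → n₂) Subtype.val)) := by
      ext i j
      rcases i with ⟨⟩ | (a | b) <;> rcases j with ⟨⟩ | (a' | b')
      · simp [Matrix.updateRow_apply, hv, hr₃, Matrix.one_apply]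
      · simp [Matrix.updateRow_apply, hv, hr₃, Pi.single_apply, a'.2]
      · simp [Matrix.updateRow_apply, hv, hr₃, Pi.single_apply]
      · rfl
      · simp [Matrix.updateRow_apply, hv, hN, a.2]
      · simp [Matrix.updateRow_apply, hv, hN, a.2]
      · rfl
      · simp [Matrix.updateRow_apply, hv, hN, a'.2]
      · simp [Matrix.updateRow_apply, hv, hN]
    rw [e3, Matrix.det_fromBlocks_zero₁₂, Matrix.det_one, one_mul,
      Matrix.det_fromBlocks_zero₁₂]
  rw [hsplit, h1, h2, h3]

end Gen

section Graph
variable {V₁ V₂ : Type*} [Fintype V₁] [Fintype V₂] [DecidableEq V₁] [DecidableEq V₂]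
  (G₁ : SimpleGraph V₁) (G₂ : SimpleGraph V₂) [DecidableRel G₁.Adj] [DecidableRel G₂.Adj]
  (v₁ : V₁) (v₂ : V₂)

lemma degree_eq_sum_ite {V : Type*} [Fintype V] (G : SimpleGraph V) [DecidableRel G.Adj]
    (v : V) : G.degree v = ∑ u, if G.Adj v u then 1 else 0 := by
  rw [SimpleGraph.degree, SimpleGraph.neighborFinset_eq_filter, Finset.card_filter]

@[simp] lemma glue_adj_ll (a a' : V₁) :
    (interfaceGlueOne G₁ G₂ v₁ v₂).Adj (Sum.inl a) (Sum.inl a') ↔ G₁.Adj a a' := Iff.rfl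
@[simp] lemma glue_adj_lr (a : V₁) (b : {x : V₂ // x ≠ v₂}) :
    (interfaceGlueOne G₁ G₂ v₁ v₂).Adj (Sum.inl a) (Sum.inr b) ↔ a = v₁ ∧ G₂.Adj v₂ b.1 :=
  Iff.rfl
@[simp] lemma glue_adj_rl (b : {x : V₂ // x ≠ v₂}) (a : V₁) :
    (interfaceGlueOne G₁ G₂ v₁ v₂).Adj (Sum.inr b) (Sum.inl a) ↔ a = v₁ ∧ G₂.Adj v₂ b.1 :=
  Iff.rfl
@[simp] lemma glue_adj_rr (b b' : {x : V₂ // x ≠ v₂}) :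
    (interfaceGlueOne G₁ G₂ v₁ v₂).Adj (Sum.inr b) (Sum.inr b') ↔ G₂.Adj b.1 b'.1 := Iff.rfl

lemma sum_subtype_ne {V : Type*} [Fintype V] [DecidableEq V] (v : V) (f : V → ℕ) :
    ∑ b : {y : V // y ≠ v}, f b.1 = ∑ b ∈ Finset.univ.erase v, f b := by
  rw [← Finset.sum_subtype (Finset.univ.erase v) (by simp) f]

lemma glue_degree_inl (a : V₁) :
    (interfaceGlueOne G₁ G₂ v₁ v₂).degree (Sum.inl a) =
      G₁.degree a + if a = v₁ then G₂.degree v₂ else 0 := by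
  rw [degree_eq_sum_ite, Fintype.sum_sum_type, degree_eq_sum_ite]
  congr 1
  · exact Finset.sum_congr rfl fun a' _ => by simp
  · by_cases h : a = v₁
    · subst h
      simp only [glue_adj_lr, true_and, if_pos rfl]
      rw [sum_subtype_ne v₂ (fun b => if G₂.Adj v₂ b then 1 else 0), degree_eq_sum_ite,
        ← Finset.sum_erase_add Finset.univ _ (Finset.mem_univ v₂)]
      simp
    · simp [h]

lemma glue_degree_inr (b : {x : V₂ // x ≠ v₂}) :
    (interfaceGlueOne G₁ G₂ v₁ v₂).degree (Sum.inr b) = G₂.degree b.1 := by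
  rw [degree_eq_sum_ite, Fintype.sum_sum_type]
  have h1 : ∑ a : V₁, (if (interfaceGlueOne G₁ G₂ v₁ v₂).Adj (Sum.inr b) (Sum.inl a)
      then 1 else 0) = if G₂.Adj b.1 v₂ then 1 else 0 := by
    simp only [glue_adj_rl]
    by_cases hadj : G₂.Adj v₂ b.1
    · simp [hadj, SimpleGraph.adj_comm]
    · simp [hadj, (SimpleGraph.adj_comm _ _ _).not.mp hadj]
  rw [h1]
  have h2 : ∑ b' : {x : V₂ // x ≠ v₂},
      (if (interfaceGlueOne G₁ G₂ v₁ v₂).Adj (Sum.inr b) (Sum.inr b') then 1 else 0)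
      = ∑ b' ∈ Finset.univ.erase v₂, if G₂.Adj b.1 b' then 1 else 0 := by
    simp only [glue_adj_rr]
    exact sum_subtype_ne v₂ (fun y => if G₂.Adj b.1 y then 1 else 0)
  rw [h2, degree_eq_sum_ite, ← Finset.sum_erase_add Finset.univ _ (Finset.mem_univ v₂),
    add_comm]

lemma lap_apply {V : Type*} [Fintype V] [DecidableEq V] (G : SimpleGraph V)
    [DecidableRel G.Adj] (i j : V) :
    G.lapMatrix ℝ i j = (if i = j then (G.degree i : ℝ) else 0)
      - (if G.Adj i j then 1 else 0) := by
  simp [SimpleGraph.lapMatrix, SimpleGraph.degMatrix, Matrix.diagonal_apply]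

lemma glue_lap_eq :
    ((interfaceGlueOne G₁ G₂ v₁ v₂).lapMatrix ℝ).map C - (X : ℝ[X]) • 1 =
      glueMat ((G₁.lapMatrix ℝ).map C - (X : ℝ[X]) • 1)
        ((G₂.lapMatrix ℝ).map C - (X : ℝ[X]) • 1) X v₁ v₂ := by
  ext i j
  rcases i with a | b <;> rcases j with a' | b'
  · simp only [Matrix.sub_apply, Matrix.map_apply, Matrix.smul_apply, Matrix.one_apply,
      glueMat_ll, lap_apply, glue_adj_ll, glue_degree_inl, Sum.inl.injEq, smul_eq_mul,
      mul_ite, mul_one, mul_zero]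
    by_cases h : a = a' <;> by_cases h1 : a = v₁ <;> by_cases h2 : a' = v₁ <;>
      simp_all [SimpleGraph.irrefl] <;> push_cast <;> ring
  · simp only [Matrix.sub_apply, Matrix.map_apply, Matrix.smul_apply, Matrix.one_apply,
      glueMat_lr, lap_apply, glue_adj_lr, smul_eq_mul, mul_ite, mul_one, mul_zero]
    have hb : ¬ (v₂ = b'.1) := fun h => b'.2 h.symm
    by_cases h1 : a = v₁ <;> by_cases h2 : G₂.Adj v₂ b'.1 <;>
      simp_all <;> ring
  · simp only [Matrix.sub_apply, Matrix.map_apply, Matrix.smul_apply, Matrix.one_apply,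
      glueMat_rl, lap_apply, glue_adj_rl, smul_eq_mul, mul_ite, mul_one, mul_zero]
    have hb : ¬ (b.1 = v₂) := b.2
    by_cases h1 : a' = v₁ <;> by_cases h2 : G₂.Adj v₂ b.1 <;>
      simp_all [SimpleGraph.adj_comm] <;> ring
  · simp only [Matrix.sub_apply, Matrix.map_apply, Matrix.smul_apply, Matrix.one_apply,
      glueMat_rr, lap_apply, glue_adj_rr, glue_degree_inr, Sum.inr.injEq, smul_eq_mul,
      mul_ite, mul_one, mul_zero, Subtype.ext_iff]
    try (by_cases h : b.1 = b'.1 <;> simp_all)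
end Graph

lemma charDet_deleteVertex {n : Type*} [Fintype n] [DecidableEq n] (M : Matrix n n ℝ)
    (v : n) : charDet (deleteVertex M v) =
      ((M.map C - (X : ℝ[X]) • 1).submatrix
        (Subtype.val : {y : n // y ≠ v} → n) Subtype.val).det := by
  unfold charDet deleteVertex
  congr 1
  ext i j
  simp [Matrix.one_apply, Subtype.ext_iff]

theorem charDet_interfaceGlueOne {V₁ V₂ : Type*} [Fintype V₁] [Fintype V₂]
    [DecidableEq V₁] [DecidableEq V₂]
    (G₁ : SimpleGraph V₁) (G₂ : SimpleGraph V₂)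
    [DecidableRel G₁.Adj] [DecidableRel G₂.Adj]
    (v₁ : V₁) (v₂ : V₂) :
    charDet ((interfaceGlueOne G₁ G₂ v₁ v₂).lapMatrix ℝ) =
      charDet (G₁.lapMatrix ℝ) * charDet (deleteVertex (G₂.lapMatrix ℝ) v₂) +
      charDet (deleteVertex (G₁.lapMatrix ℝ) v₁) * charDet (G₂.lapMatrix ℝ) +
      X * (charDet (deleteVertex (G₁.lapMatrix ℝ) v₁) *
        charDet (deleteVertex (G₂.lapMatrix ℝ) v₂)) := by
  rw [charDet, glue_lap_eq, det_glueMat, ← charDet_deleteVertex, ← charDet_deleteVertex]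
  rfl
end

section
/- Let Γ be a finite simple graph on Fin m with Laplacian L, and let v₁, v₂ ∈ Fin m be two distinct vertices that are not adjacent in Γ. Let Γ' be the graph obtained from Γ by adding the single edge {v₁, v₂}, with Laplacian L'. Then, as polynomials in λ over ℝ: det(L' − λ·1) = det(L − λ·1) + det(L⟨v₁⟩ − λ·1) + det(L⟨v₂⟩ − λ·1) − 2·(−1)^{v₁+v₂} · det((L − λ·1)_{(v₁,v₂)}), where M⟨v⟩ is the principal submatrix of M deleting row v and column v, M_{(i,j)} is the submatrix of M deleting row i and column j, and (−1)^{v₁+v₂} uses the numerical values of the indices v₁, v₂. -/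
open Polynomial

open scoped Classical

/-- The graph obtained from `G` by adding the single edge `{v₁, v₂}`. -/
def addEdge {m : ℕ} (G : SimpleGraph (Fin m)) (v₁ v₂ : Fin m) (h : v₁ ≠ v₂) :
    SimpleGraph (Fin m) where
  Adj x y := G.Adj x y ∨ (x = v₁ ∧ y = v₂) ∨ (x = v₂ ∧ y = v₁)
  symm := by
    constructor
    rintro x y (h' | ⟨rfl, rfl⟩ | ⟨rfl, rfl⟩)
    · exact Or.inl (G.adj_symm h')
    · exact Or.inr (Or.inr ⟨rfl, rfl⟩)
    · exact Or.inr (Or.inl ⟨rfl, rfl⟩)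
  loopless := by
    constructor
    rintro x (h' | ⟨h1, h2⟩ | ⟨h1, h2⟩)
    · exact G.irrefl h'
    · exact h (h1.symm.trans h2)
    · exact h (h2.symm.trans h1)

/-- `M - λ·1` over polynomials, whose determinant is the characteristic determinant. -/
noncomputable def charMat {m : ℕ} (M : Matrix (Fin m) (Fin m) ℝ) :
    Matrix (Fin m) (Fin m) ℝ[X] :=
  M.map C - (X : ℝ[X]) • 1

open Matrix in
lemma det_add_vecMulVec' {n : Type*} [Fintype n] [DecidableEq n] {R : Type*} [CommRing R]
    (A : Matrix n n R) (u : n → R) :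
    (A + vecMulVec u u).det = A.det + ∑ i, u i * (A.updateRow i u).det := by
  classical
  set f := (detRowAlternating : (n → R) [⋀^n]→ₗ[R] R) with hf
  have key : (A + vecMulVec u u).det = ∑ s : Finset n, f (s.piecewise (fun i => u i • u) A) := by
    have h0 : (A + vecMulVec u u : Matrix n n R)
        = ((fun i => u i • u) + (fun i => A i) : n → n → R) := by
      ext i j
      simp [vecMulVec_apply, Matrix.add_apply, add_comm]
    show f (A + vecMulVec u u) = _
    rw [h0]
    exact f.toMultilinearMap.map_add_univ _ _
  have hterm : ∀ s : Finset n,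
      f (s.piecewise (fun i => u i • u) A) = (∏ i ∈ s, u i) • f (s.piecewise (fun _ => u) A) := by
    intro s
    have h1 : s.piecewise (fun i => u i • (s.piecewise (fun _ => u) A) i)
        (s.piecewise (fun _ => u) A) = s.piecewise (fun i => u i • u) A := by
      funext i
      by_cases hi : i ∈ s
      · simp [Finset.piecewise, hi]
      · simp [Finset.piecewise, hi]
    rw [← h1]
    exact f.toMultilinearMap.map_piecewise_smul u _ s
  have hzero : ∀ s : Finset n, 2 ≤ s.card → f (s.piecewise (fun _ => u) A) = 0 := by
    intro s hs
    obtain ⟨i, hi, j, hj, hij⟩ := Finset.one_lt_card.mp hs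
    exact f.map_eq_zero_of_eq _
      (by simp [Finset.piecewise, hi, hj]) hij
  have hsub : (insert ∅ (Finset.univ.image fun i : n => ({i} : Finset n))) ⊆ Finset.univ :=
    Finset.subset_univ _
  have hout : ∀ s ∈ (Finset.univ : Finset (Finset n)),
      s ∉ insert ∅ (Finset.univ.image fun i : n => ({i} : Finset n)) →
      f (s.piecewise (fun i => u i • u) A) = 0 := by
    intro s _ hs
    have hcard : 2 ≤ s.card := by
      by_contra h
      push_neg at h
      interval_cases hc : s.card
      · exact hs (by simp [Finset.card_eq_zero.mp hc])
      · obtain ⟨i, rfl⟩ := Finset.card_eq_one.mp hc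
        exact hs (by simp)
    rw [hterm s, hzero s hcard, smul_zero]
  rw [key, ← Finset.sum_subset hsub hout, Finset.sum_insert (by simp),
    Finset.sum_image (fun i _ j _ h => Finset.singleton_injective h)]
  congr 1
  · refine Finset.sum_congr rfl fun i _ => ?_
    rw [hterm]
    simp only [Finset.prod_singleton, Finset.piecewise_singleton]
    have : f (({i} : Finset n).piecewise (fun _ => u) A) = (A.updateRow i u).det := by
      congr 1; funext k j; by_cases hk : k = i <;> simp [Finset.piecewise, hk, Matrix.updateRow, Matrix.of_apply, Function.update, hk]
    rw [this, smul_eq_mul]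

open Matrix

theorem charDet_addEdge {m : ℕ} (G : SimpleGraph (Fin (m + 1))) [DecidableRel G.Adj]
    (v₁ v₂ : Fin (m + 1)) (hne : v₁ ≠ v₂) (hnadj : ¬ G.Adj v₁ v₂) :
    (charMat ((addEdge G v₁ v₂ hne).lapMatrix ℝ)).det =
      (charMat (G.lapMatrix ℝ)).det +
      (charMat ((G.lapMatrix ℝ).submatrix v₁.succAbove v₁.succAbove)).det +
      (charMat ((G.lapMatrix ℝ).submatrix v₂.succAbove v₂.succAbove)).det -
      2 * (-1 : ℝ[X]) ^ ((v₁ : ℕ) + (v₂ : ℕ)) *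
        ((charMat (G.lapMatrix ℝ)).submatrix v₁.succAbove v₂.succAbove).det := by
  have hG21 : ¬ G.Adj v₂ v₁ := fun h => hnadj h.symm
  have hadj : ∀ x y, (addEdge G v₁ v₂ hne).Adj x y ↔
      (G.Adj x y ∨ (x = v₁ ∧ y = v₂) ∨ (x = v₂ ∧ y = v₁)) := fun _ _ => Iff.rfl
  set L := G.lapMatrix ℝ with hLdef
  set u₀ : Fin (m + 1) → ℝ := fun i => if i = v₁ then 1 else if i = v₂ then -1 else 0 with hu₀
  -- degrees in the new graph
  have hdeg : ∀ x, (addEdge G v₁ v₂ hne).degree x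
      = G.degree x + (if x = v₁ ∨ x = v₂ then 1 else 0) := by
    intro x
    by_cases hx1 : x = v₁
    · subst hx1
      have hnf : (addEdge G x v₂ hne).neighborFinset x = insert v₂ (G.neighborFinset x) := by
        ext y
        simp only [SimpleGraph.mem_neighborFinset, Finset.mem_insert, hadj]
        tauto
      rw [← SimpleGraph.card_neighborFinset_eq_degree, hnf, Finset.card_insert_of_notMem
        (by simp [SimpleGraph.mem_neighborFinset, hnadj]),
        SimpleGraph.card_neighborFinset_eq_degree, if_pos (Or.inl rfl)]
    · by_cases hx2 : x = v₂
      · subst hx2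
        have hnf : (addEdge G v₁ x hne).neighborFinset x = insert v₁ (G.neighborFinset x) := by
          ext y
          simp only [SimpleGraph.mem_neighborFinset, Finset.mem_insert, hadj]
          tauto
        rw [← SimpleGraph.card_neighborFinset_eq_degree, hnf, Finset.card_insert_of_notMem
          (by simp [SimpleGraph.mem_neighborFinset, hG21]),
          SimpleGraph.card_neighborFinset_eq_degree, if_pos (Or.inr rfl)]
      · have hnf : (addEdge G v₁ v₂ hne).neighborFinset x = G.neighborFinset x := by
          ext y
          simp only [SimpleGraph.mem_neighborFinset, hadj]
          tauto
        rw [← SimpleGraph.card_neighborFinset_eq_degree, hnf,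
          SimpleGraph.card_neighborFinset_eq_degree, if_neg (by tauto), add_zero]
  -- the Laplacian of the new graph
  have hL : (addEdge G v₁ v₂ hne).lapMatrix ℝ = L + vecMulVec u₀ u₀ := by
    ext i j
    simp only [SimpleGraph.lapMatrix, SimpleGraph.degMatrix, Matrix.sub_apply, Matrix.add_apply,
      Matrix.diagonal_apply, SimpleGraph.adjMatrix_apply, vecMulVec_apply, hLdef, hu₀, hdeg, hadj]
    by_cases h1 : i = v₁ <;> by_cases h2 : i = v₂ <;> by_cases h3 : j = v₁ <;>
      by_cases h4 : j = v₂ <;>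
      first
        | exact absurd (h1.symm.trans h2) hne
        | exact absurd (h3.symm.trans h4) hne
        | (simp_all [hne, Ne.symm hne, SimpleGraph.irrefl, eq_comm] <;> push_cast <;> ring)
  set u : Fin (m + 1) → ℝ[X] := fun i => C (u₀ i) with hu
  set A := charMat L with hAdef
  have hchar : charMat ((addEdge G v₁ v₂ hne).lapMatrix ℝ) = A + vecMulVec u u := by
    rw [hL]
    refine Matrix.ext fun i j => ?_
    simp only [charMat, Matrix.sub_apply, Matrix.add_apply, Matrix.map_apply, vecMulVec_apply,
      hu, C_mul, map_add, hAdef]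
    ring
  have hAsymm : ∀ i j, A i j = A j i := by
    intro i j
    simp only [hAdef, charMat, Matrix.sub_apply, Matrix.map_apply, Matrix.smul_apply,
      Matrix.one_apply]
    have hsym : L j i = L i j := (SimpleGraph.isSymm_lapMatrix (G := G) (R := ℝ)).apply i j
    rw [hsym]
    by_cases h : i = j
    · subst h; simp
    · rw [if_neg h, if_neg (Ne.symm h)]
  have hexp : ∀ w : Fin (m + 1), (A.updateRow w u).det
      = ∑ j : Fin (m + 1), (-1 : ℝ[X]) ^ ((w : ℕ) + (j : ℕ)) * u j
          * (A.submatrix w.succAbove j.succAbove).det := by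
    intro w
    rw [Matrix.det_succ_row _ w]
    refine Finset.sum_congr rfl fun j _ => ?_
    rw [Matrix.submatrix_updateRow_succAbove]
    congr 1
    simp [Matrix.updateRow_self]
  have huv₁ : u v₁ = 1 := by simp [hu, hu₀]
  have huv₂ : u v₂ = -1 := by simp [hu, hu₀, Ne.symm hne]
  have huo : ∀ i, i ≠ v₁ → i ≠ v₂ → u i = 0 := by
    intro i h1 h2; simp [hu, hu₀, h1, h2]
  have pair_sum : ∀ g : Fin (m + 1) → ℝ[X], (∀ i, i ≠ v₁ → i ≠ v₂ → g i = 0) →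
      ∑ i, g i = g v₁ + g v₂ := by
    intro g hg
    rw [← Finset.sum_subset (Finset.subset_univ {v₁, v₂})
      (fun x _ hx => by
        simp only [Finset.mem_insert, Finset.mem_singleton, not_or] at hx
        exact hg x hx.1 hx.2),
      Finset.sum_pair hne]
  have hupd : ∀ w : Fin (m + 1), (A.updateRow w u).det
      = (-1 : ℝ[X]) ^ ((w : ℕ) + (v₁ : ℕ)) * (A.submatrix w.succAbove v₁.succAbove).det
        - (-1 : ℝ[X]) ^ ((w : ℕ) + (v₂ : ℕ)) * (A.submatrix w.succAbove v₂.succAbove).det := by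
    intro w
    rw [hexp w, pair_sum _ (fun i h1 h2 => by rw [huo i h1 h2]; ring), huv₁, huv₂]
    ring
  have hswap : (A.submatrix v₂.succAbove v₁.succAbove).det
      = (A.submatrix v₁.succAbove v₂.succAbove).det := by
    rw [← Matrix.det_transpose]
    congr 1
    refine Matrix.ext fun i j => ?_
    simp [Matrix.transpose_apply, hAsymm]
  have hprin : ∀ w : Fin (m + 1), A.submatrix w.succAbove w.succAbove
      = charMat (L.submatrix w.succAbove w.succAbove) := by
    intro w
    refine Matrix.ext fun i j => ?_
    simp only [hAdef, charMat, Matrix.sub_apply, Matrix.map_apply, Matrix.submatrix_apply,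
      Matrix.smul_apply, Matrix.one_apply, (Fin.succAbove_right_injective (p := w)).eq_iff]
  have hpow1 : (-1 : ℝ[X]) ^ ((v₁ : ℕ) + (v₁ : ℕ)) = 1 := Even.neg_one_pow ⟨v₁, rfl⟩
  have hpow2 : (-1 : ℝ[X]) ^ ((v₂ : ℕ) + (v₂ : ℕ)) = 1 := Even.neg_one_pow ⟨v₂, rfl⟩
  have hpow3 : (-1 : ℝ[X]) ^ ((v₂ : ℕ) + (v₁ : ℕ)) = (-1 : ℝ[X]) ^ ((v₁ : ℕ) + (v₂ : ℕ)) := by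
    rw [Nat.add_comm]
  rw [hchar, det_add_vecMulVec' A u,
    pair_sum _ (fun i h1 h2 => by rw [huo i h1 h2]; ring), huv₁, huv₂,
    hupd v₁, hupd v₂, hswap, hpow1, hpow2, hpow3, hprin v₁, hprin v₂]
  ring
end

section
/- Let n ≥ 2, let L be the Laplacian matrix of the complete graph K_n on n vertices, and let v be any vertex. Let L⟨v⟩ be the principal submatrix of L obtained by deleting the row and column indexed by v. Then det(L⟨v⟩ − λ·1) = (−1)^{n−1} · (λ − 1) · (λ − n)^{n−2}, as polynomials in λ over ℝ. -/
open Polynomial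

lemma det_smul_one_sub_allOnes {F : Type*} [Field F] {m : Type*} [Fintype m] [DecidableEq m]
    [Nonempty m] (a : F) :
    (a • (1 : Matrix m m F) - Matrix.of (fun _ _ => (1 : F))).det =
      a ^ (Fintype.card m - 1) * (a - Fintype.card m) := by
  rcases eq_or_ne a 0 with rfl | ha
  · rcases eq_or_lt_of_le (show 1 ≤ Fintype.card m from Fintype.card_pos (α := m)) with h1 | h1
    · obtain ⟨i, hi⟩ := Fintype.card_eq_one_iff.mp h1.symm
      haveI : Unique m := ⟨⟨i⟩, hi⟩
      rw [Matrix.det_unique]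
      simp [← h1]
    · obtain ⟨i, j, hij⟩ := Fintype.exists_pair_of_one_lt_card h1
      rw [Matrix.det_zero_of_row_eq hij (by funext k; simp)]
      rw [zero_pow (by omega), zero_mul]
  · have key : a • (1 : Matrix m m F) - Matrix.of (fun _ _ => (1 : F)) =
        a • ((1 : Matrix m m F) + Matrix.replicateCol Unit (fun _ : m => -a⁻¹) * Matrix.replicateRow Unit (1 : m → F)) := by
      rw [smul_add, sub_eq_add_neg]
      congr 1
      ext i j
      simp [Matrix.mul_apply, ha]
    rw [key, Matrix.det_smul, Matrix.det_one_add_replicateCol_mul_replicateRow]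
    have hc : a ^ Fintype.card m = a ^ (Fintype.card m - 1) * a := by
      rw [← pow_succ]
      congr 1
      have := Fintype.card_pos (α := m); omega
    rw [hc]
    simp only [dotProduct, Pi.one_apply, one_mul, Finset.sum_const, Finset.card_univ, nsmul_eq_mul]
    field_simp
    ring

theorem charDet_lapMatrix_complete_deleted (n : ℕ) (hn : 2 ≤ n) (v : Fin n) :
    ((deleteVertex ((⊤ : SimpleGraph (Fin n)).lapMatrix ℝ) v).map C -
        (X : ℝ[X]) • 1).det =
      (-1 : ℝ[X]) ^ (n - 1) * (X - 1) * (X - C (n : ℝ)) ^ (n - 2) := by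
  haveI : Nonempty {x : Fin n // x ≠ v} := by
    obtain ⟨w, hw⟩ := Fintype.exists_ne_of_one_lt_card (by simp; omega) v
    exact ⟨⟨w, hw⟩⟩
  have hcard : Fintype.card {x : Fin n // x ≠ v} = n - 1 := by
    rw [Fintype.card_subtype_compl, Fintype.card_subtype_eq, Fintype.card_fin]
  apply Polynomial.funext
  intro r
  rw [← Polynomial.coe_evalRingHom, RingHom.map_det]
  have hmap : (((deleteVertex ((⊤ : SimpleGraph (Fin n)).lapMatrix ℝ) v).map C -
        (X : ℝ[X]) • 1).map (evalRingHom r)) =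
      ((n : ℝ) - r) • (1 : Matrix {x : Fin n // x ≠ v} {x : Fin n // x ≠ v} ℝ) -
        Matrix.of (fun _ _ => (1 : ℝ)) := by
    ext i j
    rcases eq_or_ne i j with rfl | hij
    · simp [deleteVertex, SimpleGraph.lapMatrix, Matrix.one_apply,
        SimpleGraph.degMatrix, SimpleGraph.complete_graph_degree]
      rw [Nat.cast_sub (by omega : 1 ≤ n)]
      push_cast
      ring

    · have hij' : (i : Fin n) ≠ (j : Fin n) := Subtype.coe_ne_coe.mpr hij
      simp [deleteVertex, SimpleGraph.lapMatrix, Matrix.one_apply, hij, hij',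
        SimpleGraph.degMatrix, Matrix.diagonal_apply_ne _ hij']
  rw [RingHom.mapMatrix_apply, hmap, det_smul_one_sub_allOnes, hcard]
  have e1 : n - 1 - 1 = n - 2 := by omega
  have hc1 : ((n - 1 : ℕ) : ℝ) = (n : ℝ) - 1 := by
    push_cast [Nat.cast_sub (by omega : 1 ≤ n)]; ring
  rw [e1, hc1]
  simp only [coe_evalRingHom, eval_mul, eval_pow, eval_sub, eval_X, eval_C, eval_one, eval_neg]
  rw [show ((r : ℝ) - (n : ℝ)) = -1 * ((n : ℝ) - r) by ring, mul_pow,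
    show n - 1 = (n - 2) + 1 by omega, pow_succ]
  have h4 : ((-1 : ℝ)) ^ (n - 2) * ((-1 : ℝ)) ^ (n - 2) = 1 := by
    rw [← pow_add]; exact Even.neg_one_pow ⟨n - 2, rfl⟩
  linear_combination (r - 1) * ((n : ℝ) - r) ^ (n - 2) * h4
end
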